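/- A guaranteed scoring game G with Ls(G) < Rs(G) is not invertible: there is no guaranteed H with G + H ∼ 0. -/

import Mathlib

/-- A scoring game: `la`/`ra` are the atom values (relevant when the
corresponding option list is empty), `L`/`R` the Left and Right options. -/
inductive SG : Type
  | mk (la ra : ℝ) (L R : List SG) : SG

namespace SG

theorem sizeOf_lt_of_mem {g : SG} {l : List SG} (h : g ∈ l) : sizeOf g < sizeOf l :=
  List.sizeOf_lt_of_mem h

noncomputable instance : DecidableEq SG := Classical.decEq _

def la : SG → ℝ | mk a _ _ _ => a
def ra : SG → ℝ | mk _ b _ _ => b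
def L : SG → List SG | mk _ _ l _ => l
def R : SG → List SG | mk _ _ _ r => r

/-- The list of atom values occurring in atomic followers of a game. -/
def atomList : SG → List ℝ
  | mk a b ls rs =>
    (if ls.isEmpty then [a] else (ls.attach.map (fun x => atomList x.1)).flatten)
    ++ (if rs.isEmpty then [b] else (rs.attach.map (fun x => atomList x.1)).flatten)
decreasing_by all_goals (simp only [SG.mk.sizeOf_spec]; (first | (have := sizeOf_lt_of_mem x.2) | (have := sizeOf_lt_of_mem (by assumption : x ∈ _))); omega)

/-- The guaranteed condition. -/
def Guaranteed : SG → Prop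
  | mk a b ls rs =>
    (∀ x ∈ ls, Guaranteed x) ∧ (∀ x ∈ rs, Guaranteed x) ∧
    (ls = [] → ∀ s ∈ (mk a b ls rs).atomList, a ≤ s) ∧
    (rs = [] → ∀ s ∈ (mk a b ls rs).atomList, s ≤ b)
decreasing_by all_goals (simp only [SG.mk.sizeOf_spec]; (first | (have := sizeOf_lt_of_mem x.2) | (have := sizeOf_lt_of_mem (by assumption : x ∈ _))); omega)

/-- Disjunctive sum. -/
noncomputable def add : SG → SG → SG
  | mk a1 b1 L1 R1, mk a2 b2 L2 R2 =>
    mk (a1 + a2) (b1 + b2)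
      (L1.attach.map (fun x => add x.1 (mk a2 b2 L2 R2))
        ++ L2.attach.map (fun x => add (mk a1 b1 L1 R1) x.1))
      (R1.attach.map (fun x => add x.1 (mk a2 b2 L2 R2))
        ++ R2.attach.map (fun x => add (mk a1 b1 L1 R1) x.1))
termination_by g h => sizeOf g + sizeOf h
decreasing_by all_goals (simp only [SG.mk.sizeOf_spec]; (first | (have := sizeOf_lt_of_mem x.2) | (have := sizeOf_lt_of_mem (by assumption : x ∈ _))); omega)

/-- Left- and Right-stops (as a pair). -/
noncomputable def stops : SG → ℝ × ℝ
  | mk a b ls rs =>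
    (if ls.isEmpty then a else ((ls.attach.map (fun x => (stops x.1).2)).maximum.unbotD 0),
     if rs.isEmpty then b else ((rs.attach.map (fun x => (stops x.1).1)).minimum.untopD 0))
decreasing_by all_goals (simp only [SG.mk.sizeOf_spec]; (first | (have := sizeOf_lt_of_mem x.2) | (have := sizeOf_lt_of_mem (by assumption : x ∈ _))); omega)

noncomputable def Ls (g : SG) : ℝ := g.stops.1
noncomputable def Rs (g : SG) : ℝ := g.stops.2

/-- The conjugate: interchange Left and Right and negate atoms. -/
noncomputable def conj : SG → SG
  | mk a b ls rs =>
    mk (-b) (-a) (rs.attach.map (fun x => conj x.1)) (ls.attach.map (fun x => conj x.1))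
decreasing_by all_goals (simp only [SG.mk.sizeOf_spec]; (first | (have := sizeOf_lt_of_mem x.2) | (have := sizeOf_lt_of_mem (by assumption : x ∈ _))); omega)

/-- The game ⟨∅^s | ∅^s⟩ of a real number `s`. -/
def num (s : ℝ) : SG := mk s s [] []

/-- The zero game ⟨∅^0 | ∅^0⟩. -/
def zero : SG := num 0

/-- Waiting moves: the image of the Normal-play integer `n`. -/
def wait : ℕ → SG
  | 0 => zero
  | n + 1 => mk 0 0 [wait n] []

/-- Birthday: the depth of the game tree. -/
def birthday : SG → ℕ
  | mk _ _ ls rs =>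
    max ((ls.attach.map (fun x => birthday x.1 + 1)).maximum.unbotD 0)
        ((rs.attach.map (fun x => birthday x.1 + 1)).maximum.unbotD 0)
decreasing_by all_goals (simp only [SG.mk.sizeOf_spec]; (first | (have := sizeOf_lt_of_mem x.2) | (have := sizeOf_lt_of_mem (by assumption : x ∈ _))); omega)

/-- `Ge G H` is the order `G ≽ H`. -/
def Ge (G H : SG) : Prop :=
  ∀ X : SG, X.Guaranteed → Ls (G.add X) ≥ Ls (H.add X) ∧ Rs (G.add X) ≥ Rs (H.add X)

/-- Equivalence `G ∼ H`. -/
def Equiv (G H : SG) : Prop := Ge G H ∧ Ge H G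

/-- Right's pass-allowed Left-stop `L̲s(G) = min_n Ls(G - n̂)`. -/
noncomputable def lsU (G : SG) : ℝ := ⨅ n : ℕ, Ls (G.add (wait n).conj)

/-- Left's pass-allowed Right-stop `R̄s(G) = max_n Rs(G + n̂)`. -/
noncomputable def rsO (G : SG) : ℝ := ⨆ n : ℕ, Rs (G.add (wait n))

/-- `L̄s(G) = max_n Ls(G + n̂)`. -/
noncomputable def lsO (G : SG) : ℝ := ⨆ n : ℕ, Ls (G.add (wait n))

/-- `R̲s(G) = min_n Rs(G + n̂)`. -/
noncomputable def rsU (G : SG) : ℝ := ⨅ n : ℕ, Rs (G.add (wait n))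

/-- Identity of games: same tree structure (up to reordering of options),
with identical atoms at atomic positions. -/
def Ident : SG → SG → Prop
  | mk a1 b1 L1 R1, mk a2 b2 L2 R2 =>
    (L1 = [] ↔ L2 = []) ∧ (L1 = [] → a1 = a2) ∧
    (R1 = [] ↔ R2 = []) ∧ (R1 = [] → b1 = b2) ∧
    (∀ x ∈ L1, ∃ y : {z // z ∈ L2}, Ident x y.1) ∧
    (∀ y ∈ L2, ∃ x : {z // z ∈ L1}, Ident x.1 y) ∧
    (∀ x ∈ R1, ∃ y : {z // z ∈ R2}, Ident x y.1) ∧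
    (∀ y ∈ R2, ∃ x : {z // z ∈ R1}, Ident x.1 y)
termination_by g h => sizeOf g
decreasing_by all_goals (simp only [SG.mk.sizeOf_spec]; (first | (have := sizeOf_lt_of_mem x.2) | (have := sizeOf_lt_of_mem (by assumption : x ∈ _))); omega)

/-- `Linked H G`: `H` is linked to `G` (by some guaranteed `T`). -/
def Linked (H G : SG) : Prop :=
  ∃ T : SG, T.Guaranteed ∧ Ls (H.add T) < 0 ∧ 0 < Rs (G.add T)

/-- Replace every atom of `G` by `∅^x`. -/
def subst (v : ℝ) : SG → SG
  | mk _ _ ls rs =>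
    mk v v (ls.attach.map (fun x => subst v x.1)) (rs.attach.map (fun x => subst v x.1))
decreasing_by all_goals (simp only [SG.mk.sizeOf_spec]; (first | (have := sizeOf_lt_of_mem x.2) | (have := sizeOf_lt_of_mem (by assumption : x ∈ _))); omega)

/-- The maximum atom value in `G`. -/
noncomputable def maxAtom (G : SG) : ℝ := G.atomList.maximum.unbotD 0

/-- The minimum atom value in `G`. -/
noncomputable def minAtom (G : SG) : ℝ := G.atomList.minimum.untopD 0

theorem add_mk (a1 b1 : ℝ) (L1 R1 : List SG) (a2 b2 : ℝ) (L2 R2 : List SG) :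
    (mk a1 b1 L1 R1).add (mk a2 b2 L2 R2) =
    mk (a1 + a2) (b1 + b2)
      (L1.map (fun x => x.add (mk a2 b2 L2 R2)) ++ L2.map (fun x => (mk a1 b1 L1 R1).add x))
      (R1.map (fun x => x.add (mk a2 b2 L2 R2)) ++ R2.map (fun x => (mk a1 b1 L1 R1).add x)) := by
  rw [add]
  simp [List.attach_map_val]

theorem la_add (U V : SG) : (U.add V).la = U.la + V.la := by
  cases U; cases V; rw [add_mk]; rfl

theorem ra_add (U V : SG) : (U.add V).ra = U.ra + V.ra := by
  cases U; cases V; rw [add_mk]; rfl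

theorem L_add (U V : SG) :
    (U.add V).L = U.L.map (fun x => x.add V) ++ V.L.map (fun x => U.add x) := by
  cases U; cases V; rw [add_mk]; rfl

theorem R_add (U V : SG) :
    (U.add V).R = U.R.map (fun x => x.add V) ++ V.R.map (fun x => U.add x) := by
  cases U; cases V; rw [add_mk]; rfl

theorem stops_mk (a b : ℝ) (ls rs : List SG) :
    stops (mk a b ls rs) =
    (if ls.isEmpty then a else ((ls.map (fun x => (stops x).2)).maximum.unbotD 0),
     if rs.isEmpty then b else ((rs.map (fun x => (stops x).1)).minimum.untopD 0)) := by
  rw [stops]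
  simp [List.attach_map_val]

theorem Ls_def (U : SG) :
    Ls U = if U.L = [] then U.la else ((U.L.map Rs).maximum.unbotD 0) := by
  cases U with
  | mk a b ls rs =>
    show (stops _).1 = _
    rw [stops_mk]
    simp only [L, la, List.isEmpty_iff]
    rfl

theorem Rs_def (U : SG) :
    Rs U = if U.R = [] then U.ra else ((U.R.map Ls).minimum.untopD 0) := by
  cases U with
  | mk a b ls rs =>
    show (stops _).2 = _
    rw [stops_mk]
    simp only [R, ra, List.isEmpty_iff]
    rfl

theorem Ls_of_L_nil {U : SG} (h : U.L = []) : Ls U = U.la := by rw [Ls_def, if_pos h]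
theorem Rs_of_R_nil {U : SG} (h : U.R = []) : Rs U = U.ra := by rw [Rs_def, if_pos h]

theorem Rs_le_Ls_of_mem {U : SG} {x : SG} (hx : x ∈ U.L) : Rs x ≤ Ls U := by
  rw [Ls_def, if_neg (List.ne_nil_of_mem hx)]
  have h1 : (Rs x : WithBot ℝ) ≤ (U.L.map Rs).maximum :=
    List.le_maximum_of_mem' (List.mem_map_of_mem (f := Rs) hx)
  rcases hm : (U.L.map Rs).maximum with _ | m
  · rw [hm] at h1
    exact absurd h1 (WithBot.not_coe_le_bot _)
  · rw [hm] at h1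
    exact le_trans (WithBot.coe_le_coe.mp h1) (le_of_eq rfl)

theorem exists_Ls_eq {U : SG} (h : U.L ≠ []) : ∃ x ∈ U.L, Ls U = Rs x := by
  have hne : U.L.map Rs ≠ [] := by simpa using h
  rcases hm : (U.L.map Rs).maximum with _ | m
  · exact absurd (List.maximum_eq_bot.mp hm) hne
  · have hmem := List.maximum_mem hm
    rcases List.mem_map.mp hmem with ⟨x, hx, hxe⟩
    refine ⟨x, hx, ?_⟩
    rw [Ls_def, if_neg h, hm]
    exact hxe.symm ▸ rfl

theorem Ls_le_of_forall {U : SG} {c : ℝ} (h : U.L ≠ []) (hb : ∀ x ∈ U.L, Rs x ≤ c) :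
    Ls U ≤ c := by
  rcases exists_Ls_eq h with ⟨x, hx, he⟩
  rw [he]; exact hb x hx

theorem Ls_le_Rs_of_mem {U : SG} {x : SG} (hx : x ∈ U.R) : Rs U ≤ Ls x := by
  rw [Rs_def, if_neg (List.ne_nil_of_mem hx)]
  have h1 : (U.R.map Ls).minimum ≤ (Ls x : WithTop ℝ) :=
    List.minimum_le_of_mem' (List.mem_map_of_mem (f := Ls) hx)
  rcases hm : (U.R.map Ls).minimum with _ | m
  · have h2 : U.R.map Ls = [] := List.minimum_eq_top.mp hm
    simp [List.ne_nil_of_mem hx] at h2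
  · rw [hm] at h1
    exact le_trans (le_of_eq rfl) (WithTop.coe_le_coe.mp h1)

theorem exists_Rs_eq {U : SG} (h : U.R ≠ []) : ∃ x ∈ U.R, Rs U = Ls x := by
  have hne : U.R.map Ls ≠ [] := by simpa using h
  rcases hm : (U.R.map Ls).minimum with _ | m
  · exact absurd (List.minimum_eq_top.mp hm) hne
  · have hmem := List.minimum_mem hm
    rcases List.mem_map.mp hmem with ⟨x, hx, hxe⟩
    refine ⟨x, hx, ?_⟩
    rw [Rs_def, if_neg h, hm]
    exact hxe.symm ▸ rfl

theorem le_Rs_of_forall {U : SG} {c : ℝ} (h : U.R ≠ []) (hb : ∀ x ∈ U.R, c ≤ Ls x) :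
    c ≤ Rs U := by
  rcases exists_Rs_eq h with ⟨x, hx, he⟩
  rw [he]; exact hb x hx

theorem atomList_mk (a b : ℝ) (ls rs : List SG) :
    atomList (mk a b ls rs) =
    (if ls.isEmpty then [a] else (ls.map atomList).flatten)
      ++ (if rs.isEmpty then [b] else (rs.map atomList).flatten) := by
  rw [atomList]
  simp [List.attach_map_val]

theorem atomList_subset_of_mem_L {U x : SG} (hx : x ∈ U.L) :
    ∀ s ∈ atomList x, s ∈ atomList U := by
  intro s hs
  cases U with
  | mk a b ls rs =>
    rw [atomList_mk]
    have hls : ls.isEmpty = false := by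
      simpa [List.isEmpty_iff] using (List.ne_nil_of_mem hx : ls ≠ [])
    rw [hls]
    simp only [List.mem_append]
    left
    simp only [Bool.false_eq_true, if_false, List.mem_flatten]
    exact ⟨atomList x, List.mem_map_of_mem (f := atomList) hx, hs⟩

theorem atomList_subset_of_mem_R {U x : SG} (hx : x ∈ U.R) :
    ∀ s ∈ atomList x, s ∈ atomList U := by
  intro s hs
  cases U with
  | mk a b ls rs =>
    rw [atomList_mk]
    have hls : rs.isEmpty = false := by
      simpa [List.isEmpty_iff] using (List.ne_nil_of_mem hx : rs ≠ [])
    rw [hls]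
    simp only [List.mem_append]
    right
    simp only [Bool.false_eq_true, if_false, List.mem_flatten]
    exact ⟨atomList x, List.mem_map_of_mem (f := atomList) hx, hs⟩

theorem sizeOf_L_lt (U : SG) : sizeOf U.L < sizeOf U := by
  cases U with
  | mk a b ls rs => simp only [L, SG.mk.sizeOf_spec]; omega

theorem sizeOf_R_lt (U : SG) : sizeOf U.R < sizeOf U := by
  cases U with
  | mk a b ls rs => simp only [R, SG.mk.sizeOf_spec]; omega

theorem sizeOf_lt_of_mem_L {U x : SG} (hx : x ∈ U.L) : sizeOf x < sizeOf U :=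
  lt_trans (sizeOf_lt_of_mem hx) (sizeOf_L_lt U)

theorem sizeOf_lt_of_mem_R {U x : SG} (hx : x ∈ U.R) : sizeOf x < sizeOf U :=
  lt_trans (sizeOf_lt_of_mem hx) (sizeOf_R_lt U)

theorem la_mem_atomList_of_L_nil {U : SG} (h : U.L = []) : U.la ∈ atomList U := by
  cases U with
  | mk a b ls rs =>
    rw [atomList_mk]
    have : ls = [] := h
    subst this
    simp [la]

theorem ra_mem_atomList_of_R_nil {U : SG} (h : U.R = []) : U.ra ∈ atomList U := by
  cases U with
  | mk a b ls rs =>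
    rw [atomList_mk]
    have : rs = [] := h
    subst this
    simp [ra]

theorem stops_mem_atomList : ∀ (U : SG), Ls U ∈ atomList U ∧ Rs U ∈ atomList U := by
  have key : ∀ (k : ℕ) (U : SG), sizeOf U < k → (Ls U ∈ atomList U ∧ Rs U ∈ atomList U) := by
    intro k
    induction k with
    | zero => intro U h; omega
    | succ k ih =>
      intro U hU
      constructor
      · by_cases h : U.L = []
        · rw [Ls_of_L_nil h]; exact la_mem_atomList_of_L_nil h
        · rcases exists_Ls_eq h with ⟨x, hx, he⟩
          rw [he]
          exact atomList_subset_of_mem_L hx _ (ih x (by have := sizeOf_lt_of_mem_L hx; omega)).2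
      · by_cases h : U.R = []
        · rw [Rs_of_R_nil h]; exact ra_mem_atomList_of_R_nil h
        · rcases exists_Rs_eq h with ⟨x, hx, he⟩
          rw [he]
          exact atomList_subset_of_mem_R hx _ (ih x (by have := sizeOf_lt_of_mem_R hx; omega)).1
  exact fun U => key (sizeOf U + 1) U (by omega)

theorem Guaranteed_mk_iff {a b : ℝ} {ls rs : List SG} :
    Guaranteed (mk a b ls rs) ↔
    ((∀ x ∈ ls, Guaranteed x) ∧ (∀ x ∈ rs, Guaranteed x) ∧
    (ls = [] → ∀ s ∈ (mk a b ls rs).atomList, a ≤ s) ∧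
    (rs = [] → ∀ s ∈ (mk a b ls rs).atomList, s ≤ b)) := by
  rw [Guaranteed]

theorem Guaranteed.of_mem_L {U x : SG} (hU : U.Guaranteed) (hx : x ∈ U.L) : x.Guaranteed := by
  cases U with
  | mk a b ls rs => exact (Guaranteed_mk_iff.mp hU).1 x hx

theorem Guaranteed.of_mem_R {U x : SG} (hU : U.Guaranteed) (hx : x ∈ U.R) : x.Guaranteed := by
  cases U with
  | mk a b ls rs => exact (Guaranteed_mk_iff.mp hU).2.1 x hx

theorem Guaranteed.Ls_le_ra {U : SG} (hU : U.Guaranteed) (h : U.R = []) : Ls U ≤ U.ra := by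
  cases U with
  | mk a b ls rs =>
    exact (Guaranteed_mk_iff.mp hU).2.2.2 h _ (stops_mem_atomList _).1

theorem Guaranteed.la_le_Rs {U : SG} (hU : U.Guaranteed) (h : U.L = []) : U.la ≤ Rs U := by
  cases U with
  | mk a b ls rs =>
    exact (Guaranteed_mk_iff.mp hU).2.2.1 h _ (stops_mem_atomList _).2

theorem conj_mk (a b : ℝ) (ls rs : List SG) :
    conj (mk a b ls rs) = mk (-b) (-a) (rs.map conj) (ls.map conj) := by
  rw [conj]
  simp [List.attach_map_val]

theorem wait_zero : wait 0 = mk 0 0 [] [] := rfl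
theorem wait_succ (n : ℕ) : wait (n + 1) = mk 0 0 [wait n] [] := rfl

theorem conj_wait_zero : conj (wait 0) = mk (-0) (-0) [] [] := by
  rw [wait_zero, conj_mk]; simp

theorem conj_wait_succ (n : ℕ) :
    conj (wait (n + 1)) = mk (-0) (-0) [] [conj (wait n)] := by
  rw [wait_succ, conj_mk]; simp

theorem L_conj_wait (n : ℕ) : (conj (wait n)).L = [] := by
  cases n with
  | zero => rw [conj_wait_zero]; rfl
  | succ n => rw [conj_wait_succ]; rfl

theorem la_conj_wait (n : ℕ) : (conj (wait n)).la = 0 := by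
  cases n with
  | zero => rw [conj_wait_zero]; simp [la]
  | succ n => rw [conj_wait_succ]; simp [la]

theorem ra_conj_wait (n : ℕ) : (conj (wait n)).ra = 0 := by
  cases n with
  | zero => rw [conj_wait_zero]; simp [ra]
  | succ n => rw [conj_wait_succ]; simp [ra]

theorem R_wait (n : ℕ) : (wait n).R = [] := by
  cases n with
  | zero => rfl
  | succ n => rfl

theorem ra_wait (n : ℕ) : (wait n).ra = 0 := by
  cases n with
  | zero => rfl
  | succ n => rfl

theorem la_wait (n : ℕ) : (wait n).la = 0 := by
  cases n with
  | zero => rfl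
  | succ n => rfl

theorem Ls_conj_wait (n : ℕ) : Ls (conj (wait n)) = 0 := by
  rw [Ls_of_L_nil (L_conj_wait n), la_conj_wait]

theorem Rs_wait (n : ℕ) : Rs (wait n) = 0 := by
  rw [Rs_of_R_nil (R_wait n), ra_wait]

theorem Ls_wait (n : ℕ) : Ls (wait n) = 0 := by
  cases n with
  | zero => rw [wait_zero, Ls_of_L_nil (rfl : (mk (0:ℝ) 0 [] []).L = [])]; rfl
  | succ n =>
    have h : (wait (n+1)).L = [wait n] := rfl
    rcases exists_Ls_eq (by rw [h]; simp : (wait (n+1)).L ≠ []) with ⟨x, hx, he⟩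
    rw [h] at hx
    simp at hx
    rw [he, hx, Rs_wait]

theorem atomList_wait (n : ℕ) : ∀ s ∈ atomList (wait n), s = 0 := by
  induction n with
  | zero =>
    intro s hs
    rw [wait_zero, atomList_mk] at hs
    simpa using hs
  | succ n ih =>
    intro s hs
    rw [wait_succ, atomList_mk] at hs
    simp at hs
    rcases hs with hs | hs
    · exact ih s hs
    · exact hs

theorem atomList_conj_wait (n : ℕ) : ∀ s ∈ atomList (conj (wait n)), s = 0 := by
  induction n with
  | zero =>
    intro s hs
    rw [conj_wait_zero, atomList_mk] at hs
    simpa using hs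
  | succ n ih =>
    intro s hs
    rw [conj_wait_succ, atomList_mk] at hs
    simp at hs
    rcases hs with hs | hs
    · exact hs
    · exact ih s hs

theorem Guaranteed_wait (n : ℕ) : Guaranteed (wait n) := by
  induction n with
  | zero =>
    rw [wait_zero, Guaranteed_mk_iff]
    refine ⟨by simp, by simp, ?_, ?_⟩
    · intro _ s hs
      have := atomList_wait 0 s (by rw [wait_zero] at *; exact hs)
      linarith [this]
    · intro _ s hs
      have := atomList_wait 0 s (by rw [wait_zero] at *; exact hs)
      linarith [this]
  | succ n ih =>
    rw [wait_succ, Guaranteed_mk_iff]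
    refine ⟨by simpa using ih, by simp, by simp, ?_⟩
    intro _ s hs
    have := atomList_wait (n+1) s (by rw [wait_succ] at *; exact hs)
    linarith [this]

theorem Guaranteed_conj_wait (n : ℕ) : Guaranteed (conj (wait n)) := by
  induction n with
  | zero =>
    rw [conj_wait_zero, Guaranteed_mk_iff]
    refine ⟨by simp, by simp, ?_, ?_⟩
    · intro _ s hs
      have := atomList_conj_wait 0 s (by rw [conj_wait_zero] at *; exact hs)
      linarith [this]
    · intro _ s hs
      have := atomList_conj_wait 0 s (by rw [conj_wait_zero] at *; exact hs)
      linarith [this]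
  | succ n ih =>
    rw [conj_wait_succ, Guaranteed_mk_iff]
    refine ⟨by simp, by simpa using ih, ?_, by simp⟩
    intro _ s hs
    have := atomList_conj_wait (n+1) s (by rw [conj_wait_succ] at *; exact hs)
    linarith [this]

theorem Guaranteed_zero : Guaranteed zero := Guaranteed_wait 0

theorem L_zero : zero.L = [] := rfl
theorem R_zero : zero.R = [] := rfl
theorem la_zero : zero.la = 0 := rfl
theorem ra_zero : zero.ra = 0 := rfl

theorem L_zero_add (X : SG) : (zero.add X).L = X.L.map (fun x => zero.add x) := by
  rw [L_add, L_zero]; simp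

theorem R_zero_add (X : SG) : (zero.add X).R = X.R.map (fun x => zero.add x) := by
  rw [R_add, R_zero]; simp

theorem stops_zero_add : ∀ (X : SG), Ls (zero.add X) = Ls X ∧ Rs (zero.add X) = Rs X := by
  have key : ∀ (k : ℕ) (X : SG), sizeOf X < k →
      (Ls (zero.add X) = Ls X ∧ Rs (zero.add X) = Rs X) := by
    intro k
    induction k with
    | zero => intro X h; omega
    | succ k ih =>
      intro X hX
      constructor
      · by_cases h : X.L = []
        · rw [Ls_of_L_nil (by rw [L_zero_add, h]; rfl), Ls_of_L_nil h, la_add, la_zero, zero_add]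
        · have hne : (zero.add X).L ≠ [] := by rw [L_zero_add]; simpa using h
          apply le_antisymm
          · apply Ls_le_of_forall hne
            intro x hx
            rw [L_zero_add] at hx
            rcases List.mem_map.mp hx with ⟨y, hy, rfl⟩
            rw [(ih y (by have := sizeOf_lt_of_mem_L hy; omega)).2]
            exact Rs_le_Ls_of_mem hy
          · rcases exists_Ls_eq h with ⟨y, hy, he⟩
            rw [he]
            have hmem : zero.add y ∈ (zero.add X).L := by
              rw [L_zero_add]; exact List.mem_map_of_mem hy
            have := Rs_le_Ls_of_mem hmem
            rwa [(ih y (by have := sizeOf_lt_of_mem_L hy; omega)).2] at this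
      · by_cases h : X.R = []
        · rw [Rs_of_R_nil (by rw [R_zero_add, h]; rfl), Rs_of_R_nil h, ra_add, ra_zero, zero_add]
        · have hne : (zero.add X).R ≠ [] := by rw [R_zero_add]; simpa using h
          apply le_antisymm
          · rcases exists_Rs_eq h with ⟨y, hy, he⟩
            rw [he]
            have hmem : zero.add y ∈ (zero.add X).R := by
              rw [R_zero_add]; exact List.mem_map_of_mem hy
            have := Ls_le_Rs_of_mem hmem
            rwa [(ih y (by have := sizeOf_lt_of_mem_R hy; omega)).1] at this
          · apply le_Rs_of_forall hne
            intro x hx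
            rw [R_zero_add] at hx
            rcases List.mem_map.mp hx with ⟨y, hy, rfl⟩
            rw [(ih y (by have := sizeOf_lt_of_mem_R hy; omega)).1]
            exact Ls_le_Rs_of_mem hy
  exact fun X => key (sizeOf X + 1) X (by omega)

theorem one_le_sizeOf (U : SG) : 1 ≤ sizeOf U := by
  cases U with
  | mk a b ls rs => simp only [SG.mk.sizeOf_spec]; omega

theorem L_wait_succ (n : ℕ) : (wait (n+1)).L = [wait n] := rfl

theorem R_conj_wait_succ (n : ℕ) : (conj (wait (n+1))).R = [conj (wait n)] := by
  rw [conj_wait_succ]; rfl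

theorem R_conj_wait_zero : (conj (wait 0)).R = [] := by
  rw [conj_wait_zero]; rfl

theorem L_add3_cw (U V : SG) (m : ℕ) :
    ((U.add V).add (conj (wait m))).L =
      U.L.map (fun x => (x.add V).add (conj (wait m)))
        ++ V.L.map (fun x => (U.add x).add (conj (wait m))) := by
  rw [L_add, L_add, L_conj_wait]
  simp [List.map_map, Function.comp_def]

theorem R_add3_w (U V : SG) (m : ℕ) :
    ((U.add V).add (wait m)).R =
      U.R.map (fun x => (x.add V).add (wait m))
        ++ V.R.map (fun x => (U.add x).add (wait m)) := by
  rw [R_add, R_add, R_wait]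
  simp [List.map_map, Function.comp_def]

theorem R_add3_cw_succ (U V : SG) (n : ℕ) :
    ((U.add V).add (conj (wait (n+1)))).R =
      (U.R.map (fun x => (x.add V).add (conj (wait (n+1))))
        ++ V.R.map (fun x => (U.add x).add (conj (wait (n+1)))))
        ++ [(U.add V).add (conj (wait n))] := by
  rw [R_add, R_add, R_conj_wait_succ]
  simp [List.map_map, Function.comp_def]

theorem L_add3_w_succ (U V : SG) (n : ℕ) :
    ((U.add V).add (wait (n+1))).L =
      (U.L.map (fun x => (x.add V).add (wait (n+1)))
        ++ V.L.map (fun x => (U.add x).add (wait (n+1))))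
        ++ [(U.add V).add (wait n)] := by
  rw [L_add, L_add, L_wait_succ]
  simp [List.map_map, Function.comp_def]

theorem la_add3_cw (U V : SG) (m : ℕ) :
    ((U.add V).add (conj (wait m))).la = U.la + V.la := by
  rw [la_add, la_add, la_conj_wait, add_zero]

theorem ra_add3_w (U V : SG) (m : ℕ) :
    ((U.add V).add (wait m)).ra = U.ra + V.ra := by
  rw [ra_add, ra_add, ra_wait, add_zero]

/-- The six statements of the master pass-move lemma. -/
def MStmt (n : ℕ) (U V : SG) : Prop :=
  ((sizeOf U + sizeOf V ≤ n) → Ls ((U.add V).add (conj (wait n))) ≤ Ls U + Ls V) ∧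
  ((sizeOf U + sizeOf V + 1 ≤ n) → Rs ((U.add V).add (conj (wait n))) ≤ Ls U + Rs V) ∧
  ((sizeOf U + sizeOf V + 1 ≤ n) → Rs ((U.add V).add (conj (wait n))) ≤ Rs U + Ls V) ∧
  ((sizeOf U + sizeOf V + 1 ≤ n) → Rs U + Ls V ≤ Ls ((U.add V).add (wait n))) ∧
  ((sizeOf U + sizeOf V + 1 ≤ n) → Ls U + Rs V ≤ Ls ((U.add V).add (wait n))) ∧
  ((sizeOf U + sizeOf V ≤ n) → Rs U + Rs V ≤ Rs ((U.add V).add (wait n)))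

theorem master : ∀ (n : ℕ) (U V : SG), U.Guaranteed → V.Guaranteed → MStmt n U V := by
  intro n
  induction n with
  | zero =>
    intro U V _ _
    have h1 := one_le_sizeOf U
    have h2 := one_le_sizeOf V
    exact ⟨fun h => absurd h (by omega), fun h => absurd h (by omega),
      fun h => absurd h (by omega), fun h => absurd h (by omega),
      fun h => absurd h (by omega), fun h => absurd h (by omega)⟩
  | succ n ihn =>
    have inner : ∀ (k : ℕ) (U V : SG), sizeOf U + sizeOf V < k →
        U.Guaranteed → V.Guaranteed → MStmt (n+1) U V := by
      intro k
      induction k with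
      | zero => intro U V h; omega
      | succ k ihk =>
        intro U V hk hU hV
        refine ⟨?_, ?_, ?_, ?_, ?_, ?_⟩
        -- Goal 1 : Ls ((U+V) - (n+1)^) ≤ Ls U + Ls V
        · intro h
          by_cases hboth : U.L = [] ∧ V.L = []
          · rw [Ls_of_L_nil (by rw [L_add3_cw, hboth.1, hboth.2]; simp),
              la_add3_cw, Ls_of_L_nil hboth.1, Ls_of_L_nil hboth.2]
          · have hne : ((U.add V).add (conj (wait (n+1)))).L ≠ [] := by
              rw [L_add3_cw]
              simpa using fun h1 h2 => hboth ⟨h1, h2⟩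
            apply Ls_le_of_forall hne
            intro x hx
            rw [L_add3_cw] at hx
            rcases List.mem_append.mp hx with hx | hx <;>
              rcases List.mem_map.mp hx with ⟨u, hu, rfl⟩
            · have hsz := sizeOf_lt_of_mem_L hu
              have h1 := ((ihk u V (by omega) (hU.of_mem_L hu) hV).2.2.1) (by omega)
              have h2 := Rs_le_Ls_of_mem hu
              linarith
            · have hsz := sizeOf_lt_of_mem_L hu
              have h1 := ((ihk U u (by omega) hU (hV.of_mem_L hu)).2.1) (by omega)
              have h2 := Rs_le_Ls_of_mem hu
              linarith
        -- Goal 2 : Rs ((U+V) - (n+1)^) ≤ Ls U + Rs V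
        · intro h
          by_cases hVR : V.R = []
          · have hmem : (U.add V).add (conj (wait n)) ∈ ((U.add V).add (conj (wait (n+1)))).R := by
              rw [R_add3_cw_succ]; simp
            have h1 := Ls_le_Rs_of_mem hmem
            have h2 := (ihn U V hU hV).1 (by omega)
            have h3 := hV.Ls_le_ra hVR
            rw [Rs_of_R_nil hVR]
            linarith
          · rcases exists_Rs_eq hVR with ⟨v, hv, he⟩
            have hsz := sizeOf_lt_of_mem_R hv
            have hmem : (U.add v).add (conj (wait (n+1))) ∈ ((U.add V).add (conj (wait (n+1)))).R := by
              rw [R_add3_cw_succ]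
              simp only [List.mem_append, List.mem_map]
              exact Or.inl (Or.inr ⟨v, hv, rfl⟩)
            have h1 := Ls_le_Rs_of_mem hmem
            have h2 := (ihk U v (by omega) hU (hV.of_mem_R hv)).1 (by omega)
            rw [he]
            linarith
        -- Goal 3 : Rs ((U+V) - (n+1)^) ≤ Rs U + Ls V
        · intro h
          by_cases hUR : U.R = []
          · have hmem : (U.add V).add (conj (wait n)) ∈ ((U.add V).add (conj (wait (n+1)))).R := by
              rw [R_add3_cw_succ]; simp
            have h1 := Ls_le_Rs_of_mem hmem
            have h2 := (ihn U V hU hV).1 (by omega)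
            have h3 := hU.Ls_le_ra hUR
            rw [Rs_of_R_nil hUR]
            linarith
          · rcases exists_Rs_eq hUR with ⟨u, hu, he⟩
            have hsz := sizeOf_lt_of_mem_R hu
            have hmem : (u.add V).add (conj (wait (n+1))) ∈ ((U.add V).add (conj (wait (n+1)))).R := by
              rw [R_add3_cw_succ]
              simp only [List.mem_append, List.mem_map]
              exact Or.inl (Or.inl ⟨u, hu, rfl⟩)
            have h1 := Ls_le_Rs_of_mem hmem
            have h2 := (ihk u V (by omega) (hU.of_mem_R hu) hV).1 (by omega)
            rw [he]
            linarith
        -- Goal 4 : Rs U + Ls V ≤ Ls ((U+V) + (n+1)^)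
        · intro h
          by_cases hVL : V.L = []
          · have hmem : (U.add V).add (wait n) ∈ ((U.add V).add (wait (n+1))).L := by
              rw [L_add3_w_succ]; simp
            have h1 := Rs_le_Ls_of_mem hmem
            have h2 := (ihn U V hU hV).2.2.2.2.2 (by omega)
            have h3 := hV.la_le_Rs hVL
            rw [Ls_of_L_nil hVL]
            linarith
          · rcases exists_Ls_eq hVL with ⟨v, hv, he⟩
            have hsz := sizeOf_lt_of_mem_L hv
            have hmem : (U.add v).add (wait (n+1)) ∈ ((U.add V).add (wait (n+1))).L := by
              rw [L_add3_w_succ]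
              simp only [List.mem_append, List.mem_map]
              exact Or.inl (Or.inr ⟨v, hv, rfl⟩)
            have h1 := Rs_le_Ls_of_mem hmem
            have h2 := (ihk U v (by omega) hU (hV.of_mem_L hv)).2.2.2.2.2 (by omega)
            rw [he]
            linarith
        -- Goal 5 : Ls U + Rs V ≤ Ls ((U+V) + (n+1)^)
        · intro h
          by_cases hUL : U.L = []
          · have hmem : (U.add V).add (wait n) ∈ ((U.add V).add (wait (n+1))).L := by
              rw [L_add3_w_succ]; simp
            have h1 := Rs_le_Ls_of_mem hmem
            have h2 := (ihn U V hU hV).2.2.2.2.2 (by omega)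
            have h3 := hU.la_le_Rs hUL
            rw [Ls_of_L_nil hUL]
            linarith
          · rcases exists_Ls_eq hUL with ⟨u, hu, he⟩
            have hsz := sizeOf_lt_of_mem_L hu
            have hmem : (u.add V).add (wait (n+1)) ∈ ((U.add V).add (wait (n+1))).L := by
              rw [L_add3_w_succ]
              simp only [List.mem_append, List.mem_map]
              exact Or.inl (Or.inl ⟨u, hu, rfl⟩)
            have h1 := Rs_le_Ls_of_mem hmem
            have h2 := (ihk u V (by omega) (hU.of_mem_L hu) hV).2.2.2.2.2 (by omega)
            rw [he]
            linarith
        -- Goal 6 : Rs U + Rs V ≤ Rs ((U+V) + (n+1)^)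
        · intro h
          by_cases hboth : U.R = [] ∧ V.R = []
          · have hnil : ((U.add V).add (wait (n+1))).R = [] := by
              rw [R_add3_w, hboth.1, hboth.2]; simp
            rw [Rs_of_R_nil hnil, ra_add3_w, Rs_of_R_nil hboth.1, Rs_of_R_nil hboth.2]
          · have hne : ((U.add V).add (wait (n+1))).R ≠ [] := by
              rw [R_add3_w]
              simpa using fun h1 h2 => hboth ⟨h1, h2⟩
            apply le_Rs_of_forall hne
            intro x hx
            rw [R_add3_w] at hx
            rcases List.mem_append.mp hx with hx | hx <;>
              rcases List.mem_map.mp hx with ⟨u, hu, rfl⟩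
            · have hsz := sizeOf_lt_of_mem_R hu
              have h1 := ((ihk u V (by omega) (hU.of_mem_R hu) hV).2.2.2.2.1) (by omega)
              have h2 := Ls_le_Rs_of_mem hu
              linarith
            · have hsz := sizeOf_lt_of_mem_R hu
              have h1 := ((ihk U u (by omega) hU (hV.of_mem_R hu)).2.2.2.1) (by omega)
              have h2 := Ls_le_Rs_of_mem hu
              linarith
    exact fun U V hU hV => inner (sizeOf U + sizeOf V + 1) U V (by omega) hU hV

/-- A zugzwang game (`Ls(G) < Rs(G)`) is not invertible. -/
theorem zugzwang_not_invertible (G : SG) (hG : G.Guaranteed)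
    (h : G.Ls < G.Rs) :
    ¬ ∃ H : SG, H.Guaranteed ∧ Equiv (G.add H) zero := by
  rintro ⟨H, hH, hGe1, hGe2⟩
  set n := sizeOf G + sizeOf H + 1 with hn
  have hcw := Guaranteed_conj_wait n
  have e1 := (hGe1 _ hcw).1
  have e2 := (hGe2 _ hcw).1
  rw [(stops_zero_add _).1, Ls_conj_wait] at e1 e2
  have hw := Guaranteed_wait n
  have f1 := (hGe1 _ hw).1
  have f2 := (hGe2 _ hw).1
  rw [(stops_zero_add _).1, Ls_wait] at f1 f2
  have m1 := (master n G H hG hH).1 (by omega)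
  have m4 := (master n G H hG hH).2.2.2.1 (by omega)
  have k1 : (0:ℝ) ≤ Ls G + Ls H := le_trans e1 m1
  have k2 : Rs G + Ls H ≤ 0 := le_trans m4 f2
  linarith

end SG
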